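/- Let G be a group with finite generating set S and word norm ‖·‖, let λ : G → ℤ and δ : G × G → ℤ satisfy λ(φψ) = λ(φ) + λ(ψ) + 2δ(φ,ψ), and suppose |δ(φ,ψ)| ≤ C₂‖φ‖‖ψ‖ for all φ,ψ ∈ G and |λ(s)| ≤ C₃ for s ∈ S ∪ S⁻¹. Then for all φ ∈ G with ‖φ‖ = n ≥ 1, |λ(φ)| ≤ C₃·n + C₂·n(n−1). -/
import Mathlib


/-- The word norm on a group `G` with respect to a set `S`:
the minimal length of a word in `S ∪ S⁻¹` representing `g`. -/
noncomputable def wordNorm {G : Type*} [Group G] (S : Set G) (g : G) : ℕ :=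
  sInf {n : ℕ | ∃ l : List G, (∀ x ∈ l, x ∈ S ∪ S⁻¹) ∧ l.length = n ∧ l.prod = g}

lemma wordNorm_le_length {G : Type*} [Group G] (S : Set G) (l : List G)
    (hl : ∀ x ∈ l, x ∈ S ∪ S⁻¹) : wordNorm S l.prod ≤ l.length :=
  Nat.sInf_le ⟨l, hl, rfl, rfl⟩

lemma wordNorm_one {G : Type*} [Group G] (S : Set G) : wordNorm S (1 : G) = 0 :=
  Nat.le_zero.mp (wordNorm_le_length S [] (by simp))

lemma key_bound {G : Type*} [Group G] (S : Set G)
    (lam : G → ℤ) (del : G × G → ℤ)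
    (hMorita : ∀ φ ψ : G, lam (φ * ψ) = lam φ + lam ψ + 2 * del (φ, ψ))
    (C₂ C₃ : ℤ) (hC₂ : 0 ≤ C₂)
    (hdel : ∀ φ ψ : G, |del (φ, ψ)| ≤ C₂ * wordNorm S φ * wordNorm S ψ)
    (hlam : ∀ s ∈ S ∪ S⁻¹, |lam s| ≤ C₃) :
    ∀ l : List G, (∀ x ∈ l, x ∈ S ∪ S⁻¹) →
      |lam l.prod| ≤ C₃ * l.length + C₂ * l.length * (l.length - 1) := by
  have hlam1 : lam 1 = 0 := by
    have h := hMorita 1 1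
    have hd : del (1, 1) = 0 := by
      have := hdel 1 1
      rw [wordNorm_one] at this
      simpa using this
    rw [one_mul, hd] at h
    linarith
  intro l
  induction l with
  | nil => intro _; simp [hlam1]
  | cons s t ih =>
    intro hmem
    have hs : s ∈ S ∪ S⁻¹ := hmem s (by simp)
    have ht : ∀ x ∈ t, x ∈ S ∪ S⁻¹ := fun x hx => hmem x (by simp [hx])
    have ih' := ih ht
    have hns : (wordNorm S s : ℤ) ≤ 1 := by
      have := wordNorm_le_length S [s] (by simpa using hs)
      simpa using Int.ofNat_le.mpr this
    have hnt : (wordNorm S t.prod : ℤ) ≤ t.length := by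
      exact_mod_cast wordNorm_le_length S t ht
    have hd := hdel s t.prod
    have hd' : |del (s, t.prod)| ≤ C₂ * t.length := by
      calc |del (s, t.prod)| ≤ C₂ * wordNorm S s * wordNorm S t.prod := hd
        _ ≤ C₂ * 1 * t.length := by
            have h1 : (0:ℤ) ≤ (wordNorm S t.prod : ℤ) := Int.ofNat_nonneg _
            have h3 : C₂ * (wordNorm S s : ℤ) ≤ C₂ * 1 := by
              exact mul_le_mul_of_nonneg_left hns hC₂
            calc C₂ * (wordNorm S s : ℤ) * (wordNorm S t.prod : ℤ)
                ≤ C₂ * 1 * (wordNorm S t.prod : ℤ) := mul_le_mul_of_nonneg_right h3 h1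
              _ ≤ C₂ * 1 * t.length := by
                  have : (0:ℤ) ≤ C₂ * 1 := by linarith
                  exact mul_le_mul_of_nonneg_left hnt this
        _ = C₂ * t.length := by ring
    have hls := hlam s hs
    have hM := hMorita s t.prod
    rw [List.prod_cons, hM]
    have habs : |lam s + lam t.prod + 2 * del (s, t.prod)| ≤
        |lam s| + |lam t.prod| + 2 * |del (s, t.prod)| := by
      calc |lam s + lam t.prod + 2 * del (s, t.prod)|
          ≤ |lam s + lam t.prod| + |2 * del (s, t.prod)| := abs_add_le _ _
        _ ≤ |lam s| + |lam t.prod| + 2 * |del (s, t.prod)| := by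
            rw [abs_mul]
            have := abs_add_le (lam s) (lam t.prod)
            simp only [abs_two]
            linarith
    have hlen : ((s :: t).length : ℤ) = (t.length : ℤ) + 1 := by
      simp
    rw [hlen]
    nlinarith [Int.ofNat_nonneg t.length]

theorem stmt_19 {G : Type*} [Group G] (S : Set G) (hSfin : S.Finite)
    (hSgen : Subgroup.closure S = ⊤)
    (lam : G → ℤ) (del : G × G → ℤ)
    (hMorita : ∀ φ ψ : G, lam (φ * ψ) = lam φ + lam ψ + 2 * del (φ, ψ))
    (C₂ C₃ : ℤ)
    (hdel : ∀ φ ψ : G, |del (φ, ψ)| ≤ C₂ * wordNorm S φ * wordNorm S ψ)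
    (hlam : ∀ s ∈ S ∪ S⁻¹, |lam s| ≤ C₃) :
    ∀ (φ : G) (n : ℕ), wordNorm S φ = n → 1 ≤ n →
      |lam φ| ≤ C₃ * n + C₂ * n * (n - 1) := by
  intro φ n hn hn1
  -- C₂ ≥ 0
  have hC₂ : 0 ≤ C₂ := by
    have h := hdel φ φ
    rw [hn] at h
    have h0 : (0:ℤ) ≤ |del (φ, φ)| := abs_nonneg _
    have hnpos : (0:ℤ) < (n:ℤ) := by exact_mod_cast hn1
    nlinarith [mul_pos hnpos hnpos]
  -- existence of a word of length exactly n
  have hmemcl : φ ∈ Submonoid.closure (S ∪ S⁻¹) := by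
    rw [← Subgroup.closure_toSubmonoid, hSgen]
    trivial
  obtain ⟨l, hl', hlp⟩ := Submonoid.exists_list_of_mem_closure hmemcl
  have hne : {m : ℕ | ∃ l : List G, (∀ x ∈ l, x ∈ S ∪ S⁻¹) ∧ l.length = m ∧ l.prod = φ}.Nonempty :=
    ⟨l.length, l, hl', rfl, hlp⟩
  have hmin := Nat.sInf_mem hne
  obtain ⟨w, hw, hwlen, hwprod⟩ := hmin
  have hwn : w.length = n := by rw [hwlen]; exact hn
  have := key_bound S lam del hMorita C₂ C₃ hC₂ hdel hlam w hw
  rw [hwprod, hwn] at this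
  exact this
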